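/- Assume Ω ∈ ℝ with −1 < Ω < 0. Then there exist ε₀ > 0, δ₀ > 0 and constants C₃ > 0, C₄ > 0, independent of ζ, ε, δ and of the admissible sequence, with the following property: for every admissible sequence (k_p)_{p∈ℤ}, every δ ∈ (0, δ₀], every ε ∈ (0, ε₀], and every ζ ∈ Ξ, there is at most one index p ∈ ℤ such that X_{k_p} ∈ Γ_{δ/|r_p|}(β_l), X_{k_{p−1}} ∈ Γ_{δ/|r_p|}(β_l), and neither |E_{i,j}(ε, k_p, k_{p−1})(ζ)| ≥ C₃ |X_{k_p}| / |r_p| nor |E_{i,j}(ε, k_p, k_{p−1})(ζ)| ≥ C₃ |X_{k_{p−1}}| holds; moreover, any such exceptional index p satisfies |X_{k_p}| ≤ C₄ |r_p| / ε. -/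

import Mathlib

noncomputable section

open scoped RealInnerProductSpace

/-- `ℝ³` with the Euclidean norm, coordinates `ζ = (σ, γ, η) = (ζ 0, ζ 1, ζ 2)`. -/
abbrev E3 : Type := EuclideanSpace ℝ (Fin 3)

/-- The frequency set `Ξ := {ζ ∈ ℝ³ : γ ≥ 0} \ {0}`. -/
def Xi : Set E3 := {ζ : E3 | 0 ≤ ζ 1 ∧ ζ ≠ 0}

/-- The cone `Γ_δ(β) := {ζ ∈ Ξ : |ζ/|ζ| − β| ≤ δ or |ζ/|ζ| + β| ≤ δ}`. -/
def cone (β : E3) (δ : ℝ) : Set E3 :=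
  {ζ : E3 | ζ ∈ Xi ∧ (‖‖ζ‖⁻¹ • ζ - β‖ ≤ δ ∨ ‖‖ζ‖⁻¹ • ζ + β‖ ≤ δ)}

/-- `X_k := ζ + (k/ε) β_l`. -/
def Xk (βl ζ : E3) (ε : ℝ) (k : ℤ) : E3 := ζ + (((k : ℝ)) / ε) • βl

/-- A bi-infinite integer sequence is admissible if it is strictly increasing or
strictly decreasing. -/
def Admissible (k : ℤ → ℤ) : Prop := StrictMono k ∨ StrictAnti k

/-- The oscillatory exponent `E_{i,j}(ε, k, k−r)(ζ) := ω_i(X_k) − (r/ε) ω_N(β_l) − ω_j(X_{k−r})`. -/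
def Eij (ωi ωj ωN : E3 → ℂ) (βl : E3) (ε : ℝ) (k r : ℤ) (ζ : E3) : ℂ :=
  ωi (Xk βl ζ ε k) - ((r : ℂ) / (ε : ℂ)) * ωN βl - ωj (Xk βl ζ ε (k - r))

lemma cone_facts (βl : E3) (hβlu : ‖βl‖ = 1) (X : E3) (δ' : ℝ)
    (hX : X ∈ cone βl δ') :
    ‖X - ⟪X, βl⟫ • βl‖ ≤ 2 * δ' * ‖X‖ ∧ (1 - δ') * ‖X‖ ≤ |⟪X, βl⟫| := by
  obtain ⟨⟨_, hX0⟩, hcone⟩ := hX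
  have hn : 0 < ‖X‖ := norm_pos_iff.mpr hX0
  obtain ⟨s, hs1, hs⟩ : ∃ s : ℝ, |s| = 1 ∧ ‖‖X‖⁻¹ • X - s • βl‖ ≤ δ' := by
    rcases hcone with h | h
    · exact ⟨1, abs_one, by simpa using h⟩
    · exact ⟨-1, by norm_num, by simpa [neg_smul, sub_neg_eq_add] using h⟩
  have hXs : ‖X - (s * ‖X‖) • βl‖ ≤ δ' * ‖X‖ := by
    have : X - (s * ‖X‖) • βl = ‖X‖ • (‖X‖⁻¹ • X - s • βl) := by
      rw [smul_sub, smul_smul, smul_smul, mul_inv_cancel₀ hn.ne', one_smul, mul_comm]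
    rw [this, norm_smul, Real.norm_eq_abs, abs_of_pos hn, mul_comm]
    exact mul_le_mul_of_nonneg_right hs hn.le
  have h1 : |⟪X, βl⟫ - s * ‖X‖| ≤ δ' * ‖X‖ := by
    have hcalc : ⟪X - (s * ‖X‖) • βl, βl⟫ = ⟪X, βl⟫ - s * ‖X‖ := by
      rw [inner_sub_left, real_inner_smul_left, real_inner_self_eq_norm_mul_norm, hβlu]
      ring
    calc |⟪X, βl⟫ - s * ‖X‖| = |⟪X - (s * ‖X‖) • βl, βl⟫| := by rw [hcalc]
      _ ≤ ‖X - (s * ‖X‖) • βl‖ * ‖βl‖ := abs_real_inner_le_norm _ _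
      _ ≤ δ' * ‖X‖ := by rw [hβlu, mul_one]; exact hXs
  constructor
  · calc ‖X - ⟪X, βl⟫ • βl‖ ≤ ‖X - (s * ‖X‖) • βl‖ + ‖((s * ‖X‖) - ⟪X, βl⟫) • βl‖ := by
          have : X - ⟪X, βl⟫ • βl = (X - (s * ‖X‖) • βl) + ((s * ‖X‖) - ⟪X, βl⟫) • βl := by
            rw [sub_smul]; abel
          rw [this]; exact norm_add_le _ _
      _ ≤ δ' * ‖X‖ + δ' * ‖X‖ := by
          refine add_le_add hXs ?_
          rw [norm_smul, Real.norm_eq_abs, hβlu, mul_one, abs_sub_comm]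
          exact h1
      _ = 2 * δ' * ‖X‖ := by ring
  · have : |s * ‖X‖| - |⟪X, βl⟫| ≤ δ' * ‖X‖ := by
      have := abs_sub_abs_le_abs_sub (s * ‖X‖) (⟪X, βl⟫)
      rw [abs_sub_comm] at h1; linarith
    rw [abs_mul, hs1, one_mul, abs_of_pos hn] at this
    linarith

lemma lin_approx (L : ℝ) (hL : 0 < L) (ω : E3 → ℂ) (βl : E3)
    (hLip : LipschitzWith (Real.toNNReal L) ω)
    (hLin : ∀ s : ℝ, ω (s • βl) = (s : ℂ) * ω βl) (X : E3) (u : ℝ) :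
    ‖ω X - (u : ℂ) * ω βl‖ ≤ L * ‖X - u • βl‖ := by
  have h := hLip.dist_le_mul X (u • βl)
  rw [Real.coe_toNNReal L hL.le] at h
  rw [Complex.dist_eq, hLin u] at h
  rwa [dist_eq_norm] at h

lemma inner_Xk (βl ζ : E3) (hβlu : ‖βl‖ = 1) (ε : ℝ) (m : ℤ) :
    ⟪Xk βl ζ ε m, βl⟫ = ⟪ζ, βl⟫ + (m : ℝ) / ε := by
  rw [Xk, inner_add_left, real_inner_smul_left, real_inner_self_eq_norm_mul_norm, hβlu]
  ring

set_option maxHeartbeats 1000000 in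
lemma key_lemma (βl : E3) (hβlu : ‖βl‖ = 1)
    (L : ℝ) (hL : 0 < L) (ωi ωj ωN : E3 → ℂ)
    (hiLip : LipschitzWith (Real.toNNReal L) ωi)
    (hjLip : LipschitzWith (Real.toNNReal L) ωj)
    (hiLin : ∀ s : ℝ, ωi (s • βl) = (s : ℂ) * ωi βl)
    (hjLin : ∀ s : ℝ, ωj (s • βl) = (s : ℂ) * ωj βl)
    (hne : ωi βl ≠ ωj βl)
    (Ω : ℝ) (hΩdef : (Ω : ℂ) = (ωi βl - ωN βl) / (ωj βl - ωi βl))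
    (hΩ1 : -1 < Ω) (hΩ2 : Ω < 0)
    (θ d : ℝ) (hθ : θ = min (-Ω) (1 + Ω) / 2) (hd : d = ‖ωi βl - ωj βl‖)
    (C₃ δ ε : ℝ) (hC3 : 0 < C₃) (hδ : 0 < δ) (hε : 0 < ε) (hδhalf : δ ≤ 1/2)
    (hsmall : 2*C₃ + 4*L*δ ≤ d * min (1/8 : ℝ) (θ/5))
    (k r : ℤ) (hr : r ≠ 0) (ζ : E3)
    (hc1 : Xk βl ζ ε k ∈ cone βl (δ / ((|r| : ℤ) : ℝ)))
    (hc2 : Xk βl ζ ε (k - r) ∈ cone βl (δ / ((|r| : ℤ) : ℝ)))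
    (hE1 : ‖Eij ωi ωj ωN βl ε k r ζ‖ < C₃ * ‖Xk βl ζ ε k‖ / ((|r| : ℤ) : ℝ)) :
    ‖Xk βl ζ ε k‖ ≤ 4 * ((|r| : ℤ) : ℝ) / ε ∧
    0 < (⟪ζ, βl⟫ + (k : ℝ)/ε) * (r : ℝ) ∧
    (⟪ζ, βl⟫ + ((k : ℝ) - (r : ℝ))/ε) * (r : ℝ) < 0 := by
  have hBA : ωj βl - ωi βl ≠ 0 := sub_ne_zero.mpr (Ne.symm hne)
  have hd0 : 0 < d := by
    rw [hd]; exact norm_pos_iff.mpr (sub_ne_zero.mpr hne)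
  have hθ0 : 0 < θ := by
    have : 0 < min (-Ω) (1 + Ω) := lt_min (by linarith) (by linarith)
    rw [hθ]; linarith
  set c : ℝ := min (1/8 : ℝ) (θ/5) with hcdef
  have hc0 : 0 < c := lt_min (by norm_num) (by linarith)
  have hc8 : c ≤ 1/8 := min_le_left _ _
  have hcθ : c ≤ θ/5 := min_le_right _ _
  set ρ : ℝ := ((|r| : ℤ) : ℝ) with hρdef
  have hρ1 : 1 ≤ ρ := by
    rw [hρdef]; exact_mod_cast Int.one_le_abs hr
  have hρ0 : 0 < ρ := by linarith
  have hρabs : |(r : ℝ)| = ρ := by rw [hρdef]; push_cast; rfl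
  have hρ2 : ρ ^ 2 = (r : ℝ) ^ 2 := by rw [← hρabs, sq_abs]
  set X := Xk βl ζ ε k with hXdef
  set Y := Xk βl ζ ε (k - r) with hYdef
  set t : ℝ := ⟪ζ, βl⟫ with htdef
  set u : ℝ := t + (k : ℝ)/ε with hudef
  set v : ℝ := t + ((k : ℝ) - (r : ℝ))/ε with hvdef
  have hu : ⟪X, βl⟫ = u := by rw [hXdef, inner_Xk βl ζ hβlu ε k]
  have hv : ⟪Y, βl⟫ = v := by
    rw [hYdef, inner_Xk βl ζ hβlu ε (k - r), hvdef]; push_cast; ring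
  set w : ℝ := u - (1 + Ω) * ((r : ℝ)/ε) with hwdef
  -- cone facts
  have hδ' : 0 < δ / ρ := div_pos hδ hρ0
  have hδ'le : δ / ρ ≤ δ := by
    rw [div_le_iff₀ hρ0]
    have h := mul_le_mul_of_nonneg_left hρ1 hδ.le
    linarith
  obtain ⟨hX1, hX2⟩ := cone_facts βl hβlu X (δ/ρ) hc1
  obtain ⟨hY1, hY2⟩ := cone_facts βl hβlu Y (δ/ρ) hc2
  rw [hu] at hX1 hX2
  rw [hv] at hY1 hY2
  have hnX0 : 0 ≤ ‖X‖ := norm_nonneg _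
  have hnY0 : 0 ≤ ‖Y‖ := norm_nonneg _
  have hhalf : δ / ρ ≤ 1/2 := le_trans hδ'le hδhalf
  have hXu : ‖X‖ ≤ 2 * |u| := by
    have h := mul_le_mul_of_nonneg_right (show (1:ℝ)/2 ≤ 1 - δ/ρ by linarith) hnX0
    linarith
  have hYv : ‖Y‖ ≤ 2 * |v| := by
    have h := mul_le_mul_of_nonneg_right (show (1:ℝ)/2 ≤ 1 - δ/ρ by linarith) hnY0
    linarith
  -- Lipschitz approximations
  have hi : ‖ωi X - (u : ℂ) * ωi βl‖ ≤ L * (2 * (δ/ρ) * ‖X‖) :=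
    (lin_approx L hL ωi βl hiLip hiLin X u).trans
      (mul_le_mul_of_nonneg_left hX1 hL.le)
  have hj : ‖ωj Y - (v : ℂ) * ωj βl‖ ≤ L * (2 * (δ/ρ) * ‖Y‖) :=
    (lin_approx L hL ωj βl hjLip hjLin Y v).trans
      (mul_le_mul_of_nonneg_left hY1 hL.le)
  -- complex algebra
  set A := ωi βl
  set B := ωj βl
  set N := ωN βl
  have hΩ' : (Ω : ℂ) * (B - A) = A - N := (eq_div_iff hBA).mp hΩdef
  have hvu : v = u - (r : ℝ)/ε := by rw [hvdef, hudef, sub_div]; ring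
  have hvC : (v : ℂ) = (u : ℂ) - (r : ℂ)/(ε : ℂ) := by
    rw [hvu]; push_cast; ring
  have hwC : (w : ℂ) = (u : ℂ) - (1 + (Ω:ℂ)) * ((r : ℂ)/(ε : ℂ)) := by
    rw [hwdef]; push_cast; ring
  have hM : (u : ℂ) * A - ((r : ℂ)/(ε : ℂ)) * N - (v : ℂ) * B = (A - B) * (w : ℂ) := by
    rw [hvC, hwC]
    linear_combination (-((r:ℂ)/(ε:ℂ))) * hΩ'
  have heq : (A - B) * (w : ℂ) =
      Eij ωi ωj ωN βl ε k r ζ + ((u : ℂ) * A - ωi X) + (ωj Y - (v : ℂ) * B) := by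
    simp only [Eij, ← hXdef, ← hYdef]
    linear_combination -hM
  have habs : d * |w| ≤ ‖Eij ωi ωj ωN βl ε k r ζ‖
      + L * (2 * (δ/ρ) * ‖X‖) + L * (2 * (δ/ρ) * ‖Y‖) := by
    have h0 : d * |w| = ‖(A - B) * (w : ℂ)‖ := by
      rw [norm_mul, Complex.norm_real, Real.norm_eq_abs, hd]
    rw [h0, heq]
    refine ((norm_add_le _ _).trans (add_le_add (norm_add_le _ _) le_rfl)).trans ?_
    refine add_le_add (add_le_add le_rfl ?_) ?_
    · rw [norm_sub_rev]; exact hi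
    · exact hj
  -- multiply by ρ
  have hE1' : ‖Eij ωi ωj ωN βl ε k r ζ‖ * ρ < C₃ * ‖X‖ := by
    rw [← lt_div_iff₀ hρ0]; exact hE1
  have habs' : d * |w| * ρ ≤ C₃ * ‖X‖ + 2*L*δ*‖X‖ + 2*L*δ*‖Y‖ := by
    have h := mul_le_mul_of_nonneg_right habs hρ0.le
    have e1 : L * (2 * (δ/ρ) * ‖X‖) * ρ = 2*L*δ*‖X‖ := by field_simp
    have e2 : L * (2 * (δ/ρ) * ‖Y‖) * ρ = 2*L*δ*‖Y‖ := by field_simp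
    rw [add_mul, add_mul, e1, e2] at h
    linarith [hE1']
  -- multiply by ε
  have huε : u * ε = t * ε + (k : ℝ) := by rw [hudef]; field_simp
  have hwε : w * ε = u * ε - (1 + Ω) * (r : ℝ) := by rw [hwdef]; field_simp
  have hvε : v * ε = u * ε - (r : ℝ) := by rw [hvu]; field_simp
  set W : ℝ := |w| * ε with hWdef
  set a : ℝ := |u| * ε with hadef
  set b : ℝ := |v| * ε with hbdef
  have hW0 : 0 ≤ W := mul_nonneg (abs_nonneg _) hε.le
  have ha0 : 0 ≤ a := mul_nonneg (abs_nonneg _) hε.le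
  have hb0 : 0 ≤ b := mul_nonneg (abs_nonneg _) hε.le
  have hWa : |w * ε| = W := by rw [abs_mul, abs_of_pos hε]
  have haa : |u * ε| = a := by rw [abs_mul, abs_of_pos hε]
  have hba : |v * ε| = b := by rw [abs_mul, abs_of_pos hε]
  have hF4 : b ≤ a + ρ := by
    have h1 : |v * ε| ≤ |u * ε| + |(r:ℝ)| := by
      rw [hvε]; exact abs_sub _ _
    rw [haa, hba, hρabs] at h1
    exact h1
  have hF5 : a ≤ W + ρ := by
    have h1 : |u * ε| ≤ |w * ε| + |(1 + Ω) * (r:ℝ)| := by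
      rw [show u * ε = w * ε + (1 + Ω) * (r:ℝ) by linarith [hwε]]
      exact abs_add_le _ _
    have h2 : |(1 + Ω) * (r:ℝ)| ≤ ρ := by
      rw [abs_mul, hρabs, abs_of_pos (by linarith : (0:ℝ) < 1 + Ω)]
      have h := mul_le_mul_of_nonneg_right (show (1:ℝ) + Ω ≤ 1 by linarith) hρ0.le
      linarith
    rw [haa, hWa] at h1; linarith
  have hFX : ‖X‖ * ε ≤ 2 * a := by
    have h := mul_le_mul_of_nonneg_right hXu hε.le
    rw [hadef]; linarith
  have hFY : ‖Y‖ * ε ≤ 2 * b := by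
    have h := mul_le_mul_of_nonneg_right hYv hε.le
    rw [hbdef]; linarith
  have hmain : d * W * ρ ≤ C₃ * (‖X‖*ε) + 2*L*δ*(‖X‖*ε) + 2*L*δ*(‖Y‖*ε) := by
    calc d * W * ρ = (d * |w| * ρ) * ε := by rw [hWdef]; ring
      _ ≤ (C₃ * ‖X‖ + 2*L*δ*‖X‖ + 2*L*δ*‖Y‖) * ε :=
          mul_le_mul_of_nonneg_right habs' hε.le
      _ = C₃ * (‖X‖*ε) + 2*L*δ*(‖X‖*ε) + 2*L*δ*(‖Y‖*ε) := by ring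
  have hLδ0 : (0:ℝ) ≤ 2*L*δ := by positivity
  have p1 : C₃ * (‖X‖*ε) ≤ C₃ * (2*a) := mul_le_mul_of_nonneg_left hFX hC3.le
  have p2 : 2*L*δ*(‖X‖*ε) ≤ 2*L*δ*(2*a) := mul_le_mul_of_nonneg_left hFX hLδ0
  have p3 : 2*L*δ*(‖Y‖*ε) ≤ 2*L*δ*(2*b) := mul_le_mul_of_nonneg_left hFY hLδ0
  have p4 : 2*L*δ*(2*b) ≤ 2*L*δ*(2*a + 2*ρ) :=
    mul_le_mul_of_nonneg_left (by linarith) hLδ0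
  have h2aρ : (0:ℝ) ≤ 2*a + ρ := by linarith
  have p5 : (2*C₃ + 4*L*δ) * (2*a + ρ) ≤ (d * c) * (2*a + ρ) :=
    mul_le_mul_of_nonneg_right hsmall h2aρ
  have p6 : C₃ * (2*a) + 2*L*δ*(2*a) + 2*L*δ*(2*a + 2*ρ) ≤ (2*C₃ + 4*L*δ) * (2*a + ρ) := by
    linarith [mul_nonneg hC3.le ha0, mul_nonneg hC3.le hρ0.le]
  have hs2 : W * ρ ≤ c * (2*a + ρ) := by
    have h3 : d * (W * ρ) ≤ d * (c * (2*a + ρ)) := by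
      linarith [hmain, p1, p2, p3, p4, p5, p6]
    exact le_of_mul_le_mul_left h3 hd0
  have hs3 : W ≤ W * ρ := by
    have h := mul_le_mul_of_nonneg_left hρ1 hW0
    linarith
  have h4 : c * (2*a + ρ) ≤ (1/8) * (2*a + ρ) := mul_le_mul_of_nonneg_right hc8 h2aρ
  have hG1 : a ≤ 2 * ρ := by linarith
  have hG2 : W ≤ θ * ρ := by
    have h5 : c * (2*a + ρ) ≤ c * (5 * ρ) := mul_le_mul_of_nonneg_left (by linarith) hc0.le
    have h6 : c * (5 * ρ) ≤ (θ/5) * (5 * ρ) := mul_le_mul_of_nonneg_right hcθ (by linarith)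
    linarith
  have hr2 : 0 < (r:ℝ)^2 := by
    have : (r:ℝ) ≠ 0 := Int.cast_ne_zero.mpr hr
    positivity
  have hwr : |w * ε * (r:ℝ)| ≤ θ * (r:ℝ)^2 := by
    have h7 : W * ρ ≤ θ * ρ * ρ := mul_le_mul_of_nonneg_right hG2 hρ0.le
    calc |w * ε * (r:ℝ)| = W * ρ := by rw [abs_mul, hWa, hρabs]
      _ ≤ θ * ρ * ρ := h7
      _ = θ * (r:ℝ)^2 := by rw [show θ * ρ * ρ = θ * ρ^2 by ring, hρ2]
  refine ⟨?_, ?_, ?_⟩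
  · rw [le_div_iff₀ hε]
    linarith
  · -- 0 < u * r
    have hθΩ : θ ≤ (1 + Ω)/2 := by
      rw [hθ]; have := min_le_right (-Ω) (1 + Ω); linarith
    have h6 : -(θ * (r:ℝ)^2) ≤ w * ε * (r:ℝ) := neg_le_of_abs_le hwr
    have q1 : θ * (r:ℝ)^2 ≤ ((1+Ω)/2) * (r:ℝ)^2 := mul_le_mul_of_nonneg_right hθΩ hr2.le
    have q2 : 0 < ((1+Ω)/2) * (r:ℝ)^2 := mul_pos (by linarith) hr2
    have h7 : 0 < (u * ε) * (r:ℝ) := by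
      have he : (u * ε) * (r:ℝ) = w * ε * (r:ℝ) + (1 + Ω) * (r:ℝ)^2 := by
        rw [hwε]; ring
      rw [he]; linarith
    have he2 : u * (r:ℝ) = ((u * ε) * (r:ℝ)) * ε⁻¹ := by
      field_simp
    rw [show (t + (k : ℝ)/ε) * (r:ℝ) = u * (r:ℝ) from rfl, he2]
    exact mul_pos h7 (inv_pos.mpr hε)
  · -- v * r < 0
    have hθΩ : θ ≤ -Ω/2 := by
      rw [hθ]; have := min_le_left (-Ω) (1 + Ω); linarith
    have h6 : w * ε * (r:ℝ) ≤ θ * (r:ℝ)^2 := le_of_abs_le hwr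
    have q1 : θ * (r:ℝ)^2 ≤ (-Ω/2) * (r:ℝ)^2 := mul_le_mul_of_nonneg_right hθΩ hr2.le
    have h7 : (v * ε) * (r:ℝ) < 0 := by
      have he : (v * ε) * (r:ℝ) = w * ε * (r:ℝ) + Ω * (r:ℝ)^2 := by
        rw [hvε, hwε]; ring
      have q2 : (Ω/2) * (r:ℝ)^2 < 0 :=
        mul_neg_of_neg_of_pos (by linarith) hr2
      rw [he]; linarith
    have he2 : v * (r:ℝ) = ((v * ε) * (r:ℝ)) * ε⁻¹ := by
      field_simp
    rw [show (t + ((k : ℝ) - (r:ℝ))/ε) * (r:ℝ) = v * (r:ℝ) from rfl, he2]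
    exact mul_neg_of_neg_of_pos h7 (inv_pos.mpr hε)

set_option maxHeartbeats 1000000 in
/-- When `Ω := (ω_i(β_l) − ω_N(β_l))/(ω_j(β_l) − ω_i(β_l)) ∈ (−1, 0)`, there are
`ε₀, δ₀, C₃, C₄ > 0`, independent of `ζ, ε, δ` and of the admissible sequence, such that
for each admissible sequence, each `δ ∈ (0, δ₀]`, `ε ∈ (0, ε₀]` and `ζ ∈ Ξ`, at most one index
`p` has `X_{k_p}, X_{k_{p−1}} ∈ Γ_{δ/|r_p|}(β_l)` while both lower bounds
`|E_{i,j}| ≥ C₃|X_{k_p}|/|r_p|` and `|E_{i,j}| ≥ C₃|X_{k_{p−1}}|` fail; any such exceptional `p`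
satisfies `|X_{k_p}| ≤ C₄|r_p|/ε`. -/
theorem stmt_9 (βl : E3) (hβlu : ‖βl‖ = 1) (hβl1 : βl 1 = 0)
    (L : ℝ) (hL : 0 < L) (ωi ωj ωN : E3 → ℂ)
    (hiLip : LipschitzWith (Real.toNNReal L) ωi)
    (hjLip : LipschitzWith (Real.toNNReal L) ωj)
    (hNLip : LipschitzWith (Real.toNNReal L) ωN)
    (hiLin : ∀ s : ℝ, ωi (s • βl) = (s : ℂ) * ωi βl)
    (hjLin : ∀ s : ℝ, ωj (s • βl) = (s : ℂ) * ωj βl)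
    (hNLin : ∀ s : ℝ, ωN (s • βl) = (s : ℂ) * ωN βl)
    (hne : ωi βl ≠ ωj βl)
    (Ω : ℝ) (hΩdef : (Ω : ℂ) = (ωi βl - ωN βl) / (ωj βl - ωi βl))
    (hΩ1 : -1 < Ω) (hΩ2 : Ω < 0) :
    ∃ ε₀ > (0 : ℝ), ∃ δ₀ > (0 : ℝ), ∃ C₃ > (0 : ℝ), ∃ C₄ > (0 : ℝ),
      ∀ k : ℤ → ℤ, Admissible k →
      ∀ δ : ℝ, 0 < δ → δ ≤ δ₀ →
      ∀ ε : ℝ, 0 < ε → ε ≤ ε₀ →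
      ∀ ζ ∈ Xi,
        Set.Subsingleton {p : ℤ |
            Xk βl ζ ε (k p) ∈ cone βl (δ / ((|k p - k (p - 1)| : ℤ) : ℝ)) ∧
            Xk βl ζ ε (k (p - 1)) ∈ cone βl (δ / ((|k p - k (p - 1)| : ℤ) : ℝ)) ∧
            ¬ (C₃ * ‖Xk βl ζ ε (k p)‖ / ((|k p - k (p - 1)| : ℤ) : ℝ) ≤
                ‖Eij ωi ωj ωN βl ε (k p) (k p - k (p - 1)) ζ‖) ∧
            ¬ (C₃ * ‖Xk βl ζ ε (k (p - 1))‖ ≤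
                ‖Eij ωi ωj ωN βl ε (k p) (k p - k (p - 1)) ζ‖)} ∧
        ∀ p ∈ {p : ℤ |
            Xk βl ζ ε (k p) ∈ cone βl (δ / ((|k p - k (p - 1)| : ℤ) : ℝ)) ∧
            Xk βl ζ ε (k (p - 1)) ∈ cone βl (δ / ((|k p - k (p - 1)| : ℤ) : ℝ)) ∧
            ¬ (C₃ * ‖Xk βl ζ ε (k p)‖ / ((|k p - k (p - 1)| : ℤ) : ℝ) ≤
                ‖Eij ωi ωj ωN βl ε (k p) (k p - k (p - 1)) ζ‖) ∧
            ¬ (C₃ * ‖Xk βl ζ ε (k (p - 1))‖ ≤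
                ‖Eij ωi ωj ωN βl ε (k p) (k p - k (p - 1)) ζ‖)},
          ‖Xk βl ζ ε (k p)‖ ≤ C₄ * ((|k p - k (p - 1)| : ℤ) : ℝ) / ε := by
  have hd0 : 0 < ‖ωi βl - ωj βl‖ := by
    exact norm_pos_iff.mpr (sub_ne_zero.mpr hne)
  set d : ℝ := ‖ωi βl - ωj βl‖ with hd
  set θ : ℝ := min (-Ω) (1 + Ω) / 2 with hθ
  have hθ0 : 0 < θ := by
    have h := lt_min (show (0:ℝ) < -Ω by linarith) (show (0:ℝ) < 1 + Ω by linarith)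
    rw [hθ]; linarith
  set dm : ℝ := d * min (1/8 : ℝ) (θ/5) with hdm
  have hdm0 : 0 < dm := by
    rw [hdm]
    exact mul_pos hd0 (lt_min (by norm_num) (by linarith))
  refine ⟨1, one_pos, min (1/2) (dm/(8*L)), lt_min one_half_pos (by positivity),
    dm/8, by positivity, 4, by norm_num, ?_⟩
  intro k hadm δ hδpos hδle ε hε hεle ζ hζ
  have hδhalf : δ ≤ 1/2 := le_trans hδle (min_le_left _ _)
  have hsmall : 2*(dm/8) + 4*L*δ ≤ d * min (1/8 : ℝ) (θ/5) := by
    have h1 : δ ≤ dm/(8*L) := le_trans hδle (min_le_right _ _)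
    have h2 : 4*L*δ ≤ 4*L*(dm/(8*L)) :=
      mul_le_mul_of_nonneg_left h1 (by positivity)
    have h3 : 4*L*(dm/(8*L)) = dm/2 := by field_simp; ring
    rw [← hdm]; linarith
  set C₃ : ℝ := dm/8 with hC₃def
  have hC3 : 0 < C₃ := by positivity
  set t : ℝ := ⟪ζ, βl⟫ with htdef
  have main : ∀ p : ℤ,
      Xk βl ζ ε (k p) ∈ cone βl (δ / ((|k p - k (p - 1)| : ℤ) : ℝ)) →
      Xk βl ζ ε (k (p - 1)) ∈ cone βl (δ / ((|k p - k (p - 1)| : ℤ) : ℝ)) →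
      ‖Eij ωi ωj ωN βl ε (k p) (k p - k (p - 1)) ζ‖ <
        C₃ * ‖Xk βl ζ ε (k p)‖ / ((|k p - k (p - 1)| : ℤ) : ℝ) →
      (‖Xk βl ζ ε (k p)‖ ≤ 4 * ((|k p - k (p - 1)| : ℤ) : ℝ) / ε ∧
       0 < (t + ((k p : ℤ) : ℝ)/ε) * (((k p - k (p - 1) : ℤ)) : ℝ) ∧
       (t + (((k p : ℤ) : ℝ) - ((k p - k (p - 1) : ℤ) : ℝ))/ε) *
          (((k p - k (p - 1) : ℤ)) : ℝ) < 0) := by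
    intro p hcp hcp' hE
    have hr : k p - k (p - 1) ≠ 0 := by
      rcases hadm with hm | ha
      · have := hm (show p - 1 < p by omega); omega
      · have := ha (show p - 1 < p by omega); omega
    have hk2 : k p - (k p - k (p - 1)) = k (p - 1) := by ring
    refine key_lemma βl hβlu L hL ωi ωj ωN hiLip hjLip hiLin hjLin hne Ω hΩdef hΩ1 hΩ2
      θ d hθ hd C₃ δ ε hC3 hδpos hε hδhalf hsmall (k p) (k p - k (p - 1)) hr ζ hcp ?_ hE
    rw [hk2]; exact hcp'
  constructor
  · -- subsingleton
    intro p hp q hq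
    obtain ⟨hp1, hp2, hp3, hp4⟩ := hp
    obtain ⟨hq1, hq2, hq3, hq4⟩ := hq
    obtain ⟨-, hpP, hpN⟩ := main p hp1 hp2 (not_le.mp hp3)
    obtain ⟨-, hqP, hqN⟩ := main q hq1 hq2 (not_le.mp hq3)
    push_cast at hpP hpN hqP hqN
    -- multiply by ε
    have conv : ∀ m : ℤ,
        (0 < (t + (k m : ℝ)/ε) * ((k m : ℝ) - (k (m-1) : ℝ))) →
        ((t + ((k m : ℝ) - ((k m : ℝ) - (k (m-1) : ℝ)))/ε) * ((k m : ℝ) - (k (m-1) : ℝ)) < 0) →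
        (0 < (t*ε + (k m : ℝ)) * ((k m : ℝ) - (k (m-1) : ℝ)) ∧
         (t*ε + (k (m-1) : ℝ)) * ((k m : ℝ) - (k (m-1) : ℝ)) < 0) := by
      intro m hP hN
      constructor
      · have e : (t*ε + (k m : ℝ)) * ((k m : ℝ) - (k (m-1) : ℝ))
            = ((t + (k m : ℝ)/ε) * ((k m : ℝ) - (k (m-1) : ℝ))) * ε := by
          field_simp
        rw [e]; exact mul_pos hP hε
      · have e : (t*ε + (k (m-1) : ℝ)) * ((k m : ℝ) - (k (m-1) : ℝ))
            = ((t + ((k m : ℝ) - ((k m : ℝ) - (k (m-1) : ℝ)))/ε) * ((k m : ℝ) - (k (m-1) : ℝ))) * ε := by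
          field_simp
          ring
        rw [e]; exact mul_neg_of_neg_of_pos hN hε
    obtain ⟨hpP', hpN'⟩ := conv p hpP hpN
    obtain ⟨hqP', hqN'⟩ := conv q hqP hqN
    rcases hadm with hm | ha
    · have hint : ∀ m : ℤ, (0 < (t*ε + (k m : ℝ)) * ((k m : ℝ) - (k (m-1) : ℝ))) →
          ((t*ε + (k (m-1) : ℝ)) * ((k m : ℝ) - (k (m-1) : ℝ)) < 0) →
          ((k (m-1) : ℝ) < -(t*ε) ∧ -(t*ε) < (k m : ℝ)) := by
        intro m hP hN
        have hrm : (0:ℝ) < (k m : ℝ) - (k (m-1) : ℝ) := by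
          have h := hm (show m - 1 < m by omega)
          have : (k (m-1) : ℝ) < (k m : ℝ) := by exact_mod_cast h
          linarith
        constructor
        · rcases mul_neg_iff.mp hN with ⟨h1, h2⟩ | ⟨h1, h2⟩
          · linarith
          · linarith
        · rcases mul_pos_iff.mp hP with ⟨h1, h2⟩ | ⟨h1, h2⟩
          · linarith
          · linarith
      obtain ⟨hp5, hp6⟩ := hint p hpP' hpN'
      obtain ⟨hq5, hq6⟩ := hint q hqP' hqN'
      rcases lt_trichotomy p q with h | h | h
      · exfalso
        have h1 : k p ≤ k (q-1) := hm.monotone (by omega)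
        have h2 : ((k p : ℤ) : ℝ) ≤ ((k (q-1) : ℤ) : ℝ) := by exact_mod_cast h1
        linarith
      · exact h
      · exfalso
        have h1 : k q ≤ k (p-1) := hm.monotone (by omega)
        have h2 : ((k q : ℤ) : ℝ) ≤ ((k (p-1) : ℤ) : ℝ) := by exact_mod_cast h1
        linarith
    · have hint : ∀ m : ℤ, (0 < (t*ε + (k m : ℝ)) * ((k m : ℝ) - (k (m-1) : ℝ))) →
          ((t*ε + (k (m-1) : ℝ)) * ((k m : ℝ) - (k (m-1) : ℝ)) < 0) →
          ((k m : ℝ) < -(t*ε) ∧ -(t*ε) < (k (m-1) : ℝ)) := by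
        intro m hP hN
        have hrm : (k m : ℝ) - (k (m-1) : ℝ) < 0 := by
          have h := ha (show m - 1 < m by omega)
          have : (k m : ℝ) < (k (m-1) : ℝ) := by exact_mod_cast h
          linarith
        constructor
        · rcases mul_pos_iff.mp hP with ⟨h1, h2⟩ | ⟨h1, h2⟩
          · linarith
          · linarith
        · rcases mul_neg_iff.mp hN with ⟨h1, h2⟩ | ⟨h1, h2⟩
          · linarith
          · linarith
      obtain ⟨hp5, hp6⟩ := hint p hpP' hpN'
      obtain ⟨hq5, hq6⟩ := hint q hqP' hqN'
      rcases lt_trichotomy p q with h | h | h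
      · exfalso
        have h1 : k (q-1) ≤ k p := ha.antitone (by omega)
        have h2 : ((k (q-1) : ℤ) : ℝ) ≤ ((k p : ℤ) : ℝ) := by exact_mod_cast h1
        linarith
      · exact h
      · exfalso
        have h1 : k (p-1) ≤ k q := ha.antitone (by omega)
        have h2 : ((k (p-1) : ℤ) : ℝ) ≤ ((k q : ℤ) : ℝ) := by exact_mod_cast h1
        linarith
  · -- norm bound
    intro p hp
    obtain ⟨hp1, hp2, hp3, hp4⟩ := hp
    exact (main p hp1 hp2 (not_le.mp hp3)).1


end
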